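/- For any probability distribution Q = (Q_1,...,Q_N) on N outcomes, if at least (1−ε)N of the entries satisfy Q_m ≥ (1−ε)/N and all entries satisfy Q_m ≤ 1 − 2η((1−ε)/N) where η(x) = −x log₂ x, then the Shannon entropy satisfies H(Q) ≥ (1−ε)² log₂(N/(1−ε)) ≥ (1−2ε) log₂ N, assuming 0 < ε < 1/2 and N sufficiently large so that −(1−2ε)log₂(1−ε) ≥ 0. -/

import Mathlib

/-- `η(x) = −x log₂ x`. -/
noncomputable def eta2 (x : ℝ) : ℝ := -x * Real.logb 2 x

lemma eta2_eq (x : ℝ) : eta2 x = (Real.log 2)⁻¹ * Real.negMulLog x := by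
  simp [eta2, Real.negMulLog, Real.logb]
  ring

lemma concaveOn_eta2 : ConcaveOn ℝ (Set.Ici (0:ℝ)) eta2 := by
  have h := Real.concaveOn_negMulLog.smul (c := (Real.log 2)⁻¹)
    (by positivity)
  have he : (fun x : ℝ => (Real.log 2)⁻¹ • x.negMulLog) = eta2 := by
    funext x
    simp [eta2_eq]
  rwa [he] at h

lemma eta2_nonneg {x : ℝ} (h1 : 0 ≤ x) (h2 : x ≤ 1) : 0 ≤ eta2 x := by
  rw [eta2_eq]
  have := Real.negMulLog_nonneg h1 h2
  positivity

lemma aux_second (ε x : ℝ) (hε : 0 < ε) (hε' : ε < 1 / 2) (hx : 1 ≤ x) :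
    (1 - 2 * ε) * Real.logb 2 x ≤ (1 - ε) ^ 2 * Real.logb 2 (x / (1 - ε)) := by
  have h1ε : 0 < 1 - ε := by linarith
  have hlogN : 0 ≤ Real.logb 2 x := Real.logb_nonneg (by norm_num) hx
  have hle : x ≤ x / (1 - ε) := by
    rw [le_div_iff₀ h1ε]; nlinarith
  have hloble : Real.logb 2 x ≤ Real.logb 2 (x / (1 - ε)) :=
    Real.logb_le_logb_of_le (by norm_num) (by linarith) hle
  have h1 : 1 - 2 * ε ≤ (1 - ε) ^ 2 := by nlinarith
  calc (1 - 2*ε) * Real.logb 2 x ≤ (1 - ε)^2 * Real.logb 2 x :=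
        mul_le_mul_of_nonneg_right h1 hlogN
    _ ≤ (1 - ε)^2 * Real.logb 2 (x / (1 - ε)) :=
        mul_le_mul_of_nonneg_left hloble (sq_nonneg _)

/-- for `0 < ε < 1/2` and all sufficiently large `N`, any probability vector
`Q` on `N` outcomes with at least `(1−ε)N` entries `≥ (1−ε)/N` and all entries
`≤ 1 − 2η((1−ε)/N)` has Shannon entropy
`H(Q) ≥ (1−ε)² log₂(N/(1−ε)) ≥ (1−2ε) log₂ N`. -/
theorem stmt10 (ε : ℝ) (hε : 0 < ε) (hε' : ε < 1 / 2) :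
    ∃ N₀ : ℕ, ∀ N : ℕ, N₀ ≤ N → ∀ Q : Fin N → ℝ,
      (∀ m, 0 ≤ Q m) → (∑ m, Q m = 1) →
      ((1 - ε) * N ≤ ((Finset.univ.filter fun m => (1 - ε) / N ≤ Q m).card : ℝ)) →
      (∀ m, Q m ≤ 1 - 2 * eta2 ((1 - ε) / N)) →
      (1 - ε) ^ 2 * Real.logb 2 (N / (1 - ε)) ≤ ∑ m, eta2 (Q m) ∧
      (1 - 2 * ε) * Real.logb 2 N ≤ (1 - ε) ^ 2 * Real.logb 2 (N / (1 - ε)) := by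
  refine ⟨200, fun N hN Q hQ0 hQsum hScard hQub => ?_⟩
  have hNR : (200:ℝ) ≤ (N:ℝ) := by exact_mod_cast hN
  have hN0 : (0:ℝ) < N := by linarith
  have h1ε : 0 < 1 - ε := by linarith
  have h1ε1 : 1 - ε ≤ 1 := by linarith
  set a : ℝ := (1 - ε) / N with ha_def
  have ha0 : 0 < a := by positivity
  have haN : a ≤ 1 / 200 := by
    rw [ha_def, div_le_div_iff₀ hN0 (by norm_num)]
    nlinarith
  have ha1 : a < 1 := by linarith
  set h : ℝ := eta2 a with hh_def
  -- h ≤ 1/4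
  have hsa : Real.sqrt a ≤ 1 / 14 := by
    rw [show (1:ℝ)/14 = Real.sqrt (1/196) by
      rw [show (1:ℝ)/196 = (1/14)^2 by norm_num, Real.sqrt_sq (by norm_num)]]
    exact Real.sqrt_le_sqrt (by linarith)
  have hlog2 : (0.6931471803 : ℝ) < Real.log 2 := Real.log_two_gt_d9
  have hlog2_le : Real.log 2 < 1 := by
    have := Real.log_two_lt_d9; linarith
  have hneg_log_a : -Real.log a ≤ 2 / Real.sqrt a := by
    have hsa0 : 0 < Real.sqrt a := Real.sqrt_pos.mpr ha0
    have h1 : Real.log (Real.sqrt a)⁻¹ ≤ (Real.sqrt a)⁻¹ - 1 :=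
      Real.log_le_sub_one_of_pos (by positivity)
    have h2 : Real.log (Real.sqrt a)⁻¹ = -(1/2) * Real.log a := by
      rw [Real.log_inv, Real.log_sqrt ha0.le]; ring
    rw [h2] at h1
    have : (Real.sqrt a)⁻¹ = 1 / Real.sqrt a := by ring
    rw [this] at h1
    have h3 : 2 / Real.sqrt a = 2 * (1 / Real.sqrt a) := by ring
    rw [h3]
    linarith
  have hh_le : h ≤ 1 / 4 := by
    rw [hh_def, eta2, Real.logb]
    have hsq : Real.sqrt a * Real.sqrt a = a := Real.mul_self_sqrt ha0.le
    have hsa0 : 0 < Real.sqrt a := Real.sqrt_pos.mpr ha0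
    have key : -a * Real.log a ≤ 2 * Real.sqrt a := by
      have := mul_le_mul_of_nonneg_left hneg_log_a ha0.le
      calc -a * Real.log a = a * (-Real.log a) := by ring
        _ ≤ a * (2 / Real.sqrt a) := this
        _ = 2 * Real.sqrt a := by field_simp; nlinarith
    have hpos : (0:ℝ) < Real.log 2 := by linarith
    rw [show -a * (Real.log a / Real.log 2) = (-a * Real.log a) / Real.log 2 by ring,
      div_le_iff₀ hpos]
    nlinarith
  have hh_pos : 0 < h := by
    rw [hh_def, eta2, Real.logb]
    have hla : Real.log a < 0 := Real.log_neg ha0 ha1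
    have hpos : (0:ℝ) < Real.log 2 := by linarith
    rw [show -a * (Real.log a / Real.log 2) = (a * -Real.log a) / Real.log 2 by ring]
    exact div_pos (mul_pos ha0 (by linarith)) hpos
  set b : ℝ := 1 - 2 * h with hb_def
  have hb_half : 1 / 2 ≤ b := by rw [hb_def]; linarith
  have hb1 : b < 1 := by rw [hb_def]; linarith
  have hab : a ≤ b := by linarith
  -- η(b) ≥ h
  have hetab : h ≤ eta2 b := by
    have hb0 : 0 < b := by linarith
    have hlb : Real.log b ≤ b - 1 := Real.log_le_sub_one_of_pos hb0
    have key : h * Real.log 2 ≤ -b * Real.log b := by nlinarith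
    rw [eta2, Real.logb]
    have hpos : (0:ℝ) < Real.log 2 := by linarith
    rw [show -b * (Real.log b / Real.log 2) = (-b * Real.log b) / Real.log 2 by ring,
      le_div_iff₀ hpos]
    linarith
  -- each entry is ≤ 1 (needed only for nonneg of eta2)
  have hQ1 : ∀ m, Q m ≤ 1 := by
    intro m
    rw [← hQsum]
    exact Finset.single_le_sum (fun i _ => hQ0 i) (Finset.mem_univ m)
  set S := Finset.univ.filter fun m : Fin N => (1 - ε) / N ≤ Q m with hS_def
  -- entries in S have eta2 ≥ h
  have hkey : ∀ m ∈ S, h ≤ eta2 (Q m) := by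
    intro m hm
    have hma : a ≤ Q m := by
      rw [hS_def, Finset.mem_filter] at hm; exact hm.2
    have hmb : Q m ≤ b := hQub m
    have hmem : Q m ∈ segment ℝ a b := by
      rw [segment_eq_Icc hab]; exact ⟨hma, hmb⟩
    have := concaveOn_eta2.ge_on_segment (Set.mem_Ici.mpr ha0.le)
      (Set.mem_Ici.mpr (by linarith : (0:ℝ) ≤ b)) hmem
    calc h = min h (eta2 b) := (min_eq_left hetab).symm
      _ ≤ eta2 (Q m) := this
  -- sum bound
  have hsum1 : (S.card : ℝ) * h ≤ ∑ m ∈ S, eta2 (Q m) := by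
    calc (S.card : ℝ) * h = ∑ _m ∈ S, h := by rw [Finset.sum_const, nsmul_eq_mul]
      _ ≤ ∑ m ∈ S, eta2 (Q m) := Finset.sum_le_sum hkey
  have hsum2 : ∑ m ∈ S, eta2 (Q m) ≤ ∑ m, eta2 (Q m) :=
    Finset.sum_le_sum_of_subset_of_nonneg (Finset.subset_univ S)
      (fun m _ _ => eta2_nonneg (hQ0 m) (hQ1 m))
  have hcard : (1 - ε) * N * h ≤ (S.card : ℝ) * h :=
    mul_le_mul_of_nonneg_right hScard hh_pos.le
  -- identify (1-ε)^2 * logb 2 (N/(1-ε)) = (1-ε)*N*h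
  have hid : (1 - ε) ^ 2 * Real.logb 2 (N / (1 - ε)) = (1 - ε) * N * h := by
    have hinv : ((N:ℝ) / (1 - ε)) = a⁻¹ := by
      rw [ha_def]; field_simp
    have haN' : a * N = 1 - ε := by rw [ha_def]; field_simp
    rw [hinv, Real.logb_inv, hh_def, eta2]
    linear_combination (1 - ε) * Real.logb 2 a * haN'
  refine ⟨by rw [hid]; linarith, aux_second ε N hε hε' (le_trans (by norm_num) hNR)⟩
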